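/- For all real numbers x and y with 0 ≤ x ≤ π and 0 ≤ y ≤ π, the bivariate Michalewicz function with m = 10, f(x,y) = −sin(x)·(sin(x²/π))^20 − sin(y)·(sin(2y²/π))^20, satisfies f(x,y) ≥ −1.81. -/

import Mathlib

open Real

private lemma aux_cos_le_quad {u u0 : ℝ} (h0 : 0 ≤ u0) (h1 : u0 ≤ u) (h2 : u ≤ 1) :
    Real.cos u ≤ 1 - u0 ^ 2 / 2 + 5 / 96 * u0 ^ 4 := by
  have hu : 0 ≤ u := h0.trans h1
  have hb := Real.cos_bound (x := u) (by rw [abs_of_nonneg hu]; exact h2)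
  rw [abs_of_nonneg hu] at hb
  have h := (abs_le.mp hb).2
  have key : (0:ℝ) ≤ u ^ 2 - u0 ^ 2 := by nlinarith
  have key2 : u ^ 2 + u0 ^ 2 ≤ 2 := by nlinarith
  nlinarith [mul_le_mul_of_nonneg_left key2 key]

/-- Upper bound on `sin t` for `t` below `π/2`. -/
private lemma aux_sin_upper (t u0 : ℝ) (h0 : 0 ≤ u0) (h1 : u0 ≤ π / 2 - t)
    (h2 : π / 2 - t ≤ 1) : Real.sin t ≤ 1 - u0 ^ 2 / 2 + 5 / 96 * u0 ^ 4 := by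
  rw [← Real.cos_pi_div_two_sub]
  exact aux_cos_le_quad h0 h1 h2

private lemma aux_cos_upper2 (w w0 : ℝ) (h0 : 0 ≤ w0) (h1 : w0 ≤ w) (h2 : w ≤ 1) :
    Real.cos w ≤ 1 - 2 * (w0 / 2 - (w0 / 2) ^ 3 / 6 - 5 / 96 * (w0 / 2) ^ 4) ^ 2 := by
  have hw0 : 0 ≤ w := h0.trans h1
  have hcw : Real.cos w = 1 - 2 * Real.sin (w / 2) ^ 2 := by
    have h := Real.cos_two_mul' (w / 2)
    have h2 := Real.sin_sq_add_cos_sq (w / 2)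
    rw [show 2 * (w / 2) = w by ring] at h
    linarith
  have hw01 : w0 ≤ 1 := h1.trans h2
  have hq2 : w0 ^ 2 ≤ w0 := by nlinarith
  have hq3 : w0 ^ 3 ≤ w0 ^ 2 := by nlinarith
  have hq4 : w0 ^ 4 ≤ w0 ^ 3 := by nlinarith
  have hL : 0 ≤ w0 / 2 - (w0 / 2) ^ 3 / 6 - 5 / 96 * (w0 / 2) ^ 4 := by nlinarith
  have hsl : w / 2 - (w / 2) ^ 3 / 6 - 5 / 96 * (w / 2) ^ 4 ≤ Real.sin (w / 2) := by
    have hs := Real.sin_bound (x := w / 2)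
      (by rw [abs_of_nonneg (by linarith : (0:ℝ) ≤ w / 2)]; linarith)
    rw [abs_of_nonneg (by linarith : (0:ℝ) ≤ w / 2)] at hs
    have := (abs_le.mp hs).1
    have h4 : (0:ℝ) ≤ (w / 2) ^ 4 := by positivity
    have h5 : (w / 2) ^ 5 / 100 ≤ 5 / 96 * (w / 2) ^ 4 := by
      rw [pow_succ]; nlinarith
    linarith
  have hmono : w0 / 2 - (w0 / 2) ^ 3 / 6 - 5 / 96 * (w0 / 2) ^ 4 ≤
      w / 2 - (w / 2) ^ 3 / 6 - 5 / 96 * (w / 2) ^ 4 := by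
    have he : (0:ℝ) ≤ w - w0 := by linarith
    have hb1 : (0:ℝ) ≤ 4 - (w ^ 2 + w * w0 + w0 ^ 2) := by nlinarith [mul_nonneg hw0 h0]
    have hb2 : (0:ℝ) ≤ 4 - (w + w0) * (w ^ 2 + w0 ^ 2) := by
      nlinarith [mul_nonneg hw0 h0, sq_nonneg w, sq_nonneg w0,
        mul_nonneg (mul_nonneg hw0 hw0) hw0, mul_nonneg (mul_nonneg h0 h0) h0,
        mul_nonneg (mul_nonneg hw0 hw0) h0, mul_nonneg (mul_nonneg h0 h0) hw0]
    nlinarith [mul_nonneg he hb1, mul_nonneg he hb2]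
  have hL2 : (w0 / 2 - (w0 / 2) ^ 3 / 6 - 5 / 96 * (w0 / 2) ^ 4) ^ 2 ≤
      Real.sin (w / 2) ^ 2 := by nlinarith
  rw [hcw]
  linarith

/-- Upper bound on `sin t` for `t` above `π/2`. -/
private lemma aux_sin_upper2 (t w0 : ℝ) (h0 : 0 ≤ w0) (h1 : w0 ≤ t - π / 2)
    (h2 : t - π / 2 ≤ 1) :
    Real.sin t ≤ 1 - 2 * (w0 / 2 - (w0 / 2) ^ 3 / 6 - 5 / 96 * (w0 / 2) ^ 4) ^ 2 := by
  have hst : Real.sin t = Real.cos (t - π / 2) := by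
    rw [show t - π / 2 = -(π / 2 - t) by ring, Real.cos_neg, Real.cos_pi_div_two_sub]
  rw [hst]
  exact aux_cos_upper2 _ _ h0 h1 h2

set_option maxHeartbeats 2000000 in
/-- The key one-variable bound: `sin x · (sin (x²/π))²⁰ ≤ 0.81` on `[0, π]`. -/
private lemma aux_key (x : ℝ) (h0 : 0 ≤ x) (hp : x ≤ π) :
    Real.sin x * Real.sin (x ^ 2 / π) ^ 20 ≤ 0.81 := by
  have hpl : (3.141592 : ℝ) < π := Real.pi_gt_d6
  have hph : π < 3.141593 := Real.pi_lt_d6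
  have hpi0 : (0:ℝ) < π := Real.pi_pos
  have hx2_nonneg : (0:ℝ) ≤ x ^ 2 / π := by positivity
  have hx2_le_pi : x ^ 2 / π ≤ π := by
    rw [div_le_iff₀ hpi0]; nlinarith
  have hs0 : 0 ≤ Real.sin (x ^ 2 / π) :=
    Real.sin_nonneg_of_nonneg_of_le_pi hx2_nonneg hx2_le_pi
  have hs1 : Real.sin (x ^ 2 / π) ≤ 1 := Real.sin_le_one _
  have hsin0 : 0 ≤ Real.sin x := Real.sin_nonneg_of_nonneg_of_le_pi h0 hp
  have hsin1 : Real.sin x ≤ 1 := Real.sin_le_one x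
  have hpow0 : 0 ≤ Real.sin (x ^ 2 / π) ^ 20 := pow_nonneg hs0 _
  have hpow1 : Real.sin (x ^ 2 / π) ^ 20 ≤ 1 := pow_le_one₀ hs0 hs1
  rcases le_or_gt x 1.4 with hc | hc
  · -- small x : sin(x²/π) ≤ x²/π ≤ 0.63
    have h1 : Real.sin (x ^ 2 / π) ≤ x ^ 2 / π := Real.sin_le hx2_nonneg
    have h2 : x ^ 2 / π ≤ 0.63 := by
      rw [div_le_iff₀ hpi0]; nlinarith
    have h3 : Real.sin (x ^ 2 / π) ^ 20 ≤ (0.63:ℝ) ^ 20 :=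
      pow_le_pow_left₀ hs0 (h1.trans h2) 20
    calc Real.sin x * Real.sin (x ^ 2 / π) ^ 20
        ≤ 1 * Real.sin (x ^ 2 / π) ^ 20 := mul_le_mul_of_nonneg_right hsin1 hpow0
      _ = Real.sin (x ^ 2 / π) ^ 20 := one_mul _
      _ ≤ (0.63:ℝ) ^ 20 := h3
      _ ≤ 0.81 := by norm_num
  · -- x > 1.4 : now π/2 - x²/π ≤ 1
    have hx2_lb : (1.96:ℝ) / 3.141593 ≤ x ^ 2 / π := by
      gcongr <;> nlinarith
    have harg : π / 2 - x ^ 2 / π ≤ 1 := by nlinarith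
    have hub : ∀ b : ℝ, x ≤ b → 0 ≤ 3.141592 / 2 - b ^ 2 / 3.141592 →
        Real.sin (x ^ 2 / π) ≤ 1 - (3.141592 / 2 - b ^ 2 / 3.141592) ^ 2 / 2
          + 5 / 96 * (3.141592 / 2 - b ^ 2 / 3.141592) ^ 4 := by
      intro b hxb hb0
      apply aux_sin_upper _ _ hb0 _ harg
      have hb00 : (0:ℝ) ≤ b := h0.trans hxb
      have hxx : x ^ 2 / π ≤ b ^ 2 / 3.141592 := by
        gcongr <;> nlinarith
      nlinarith
    have hua : ∀ a : ℝ, a ≤ x → x ≤ 2.21 → 0 ≤ a - 3.141593 / 2 →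
        Real.sin x ≤ 1 - 2 * ((a - 3.141593 / 2) / 2 - ((a - 3.141593 / 2) / 2) ^ 3 / 6
          - 5 / 96 * ((a - 3.141593 / 2) / 2) ^ 4) ^ 2 := by
      intro a hax hx221 ha0
      exact aux_sin_upper2 _ _ ha0 (by nlinarith) (by nlinarith)
    have hcomb : ∀ A B : ℝ, Real.sin x ≤ A → Real.sin (x ^ 2 / π) ≤ B → 0 ≤ A →
        Real.sin x * Real.sin (x ^ 2 / π) ^ 20 ≤ A * B ^ 20 := by
      intro A B hA hB hA0
      exact mul_le_mul hA (pow_le_pow_left₀ hs0 hB 20) hpow0 hA0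
    rcases le_or_gt x 2.11 with hc2 | hc2
    · calc Real.sin x * Real.sin (x ^ 2 / π) ^ 20
          ≤ 1 * Real.sin (x ^ 2 / π) ^ 20 := mul_le_mul_of_nonneg_right hsin1 hpow0
        _ = Real.sin (x ^ 2 / π) ^ 20 := one_mul _
        _ ≤ (1 - (3.141592 / 2 - 2.11 ^ 2 / 3.141592) ^ 2 / 2
            + 5 / 96 * (3.141592 / 2 - 2.11 ^ 2 / 3.141592) ^ 4) ^ 20 :=
          pow_le_pow_left₀ hs0 (hub 2.11 hc2 (by norm_num)) 20
        _ ≤ 0.81 := by norm_num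
    rcases le_or_gt x 2.15 with hc3 | hc3
    · exact (hcomb _ _ (hua 2.11 hc2.le (by linarith) (by norm_num))
        (hub 2.15 hc3 (by norm_num)) (by norm_num)).trans (by norm_num)
    rcases le_or_gt x 2.17 with hc4 | hc4
    · exact (hcomb _ _ (hua 2.15 hc3.le (by linarith) (by norm_num))
        (hub 2.17 hc4 (by norm_num)) (by norm_num)).trans (by norm_num)
    rcases le_or_gt x 2.18 with hc5 | hc5
    · exact (hcomb _ _ (hua 2.17 hc4.le (by linarith) (by norm_num))
        (hub 2.18 hc5 (by norm_num)) (by norm_num)).trans (by norm_num)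
    rcases le_or_gt x 2.19 with hc6 | hc6
    · exact (hcomb _ _ (hua 2.18 hc5.le (by linarith) (by norm_num))
        (hub 2.19 hc6 (by norm_num)) (by norm_num)).trans (by norm_num)
    rcases le_or_gt x 2.20 with hc7 | hc7
    · exact (hcomb _ _ (hua 2.19 hc6.le (by linarith) (by norm_num))
        (hub 2.20 hc7 (by norm_num)) (by norm_num)).trans (by norm_num)
    rcases le_or_gt x 2.21 with hc8 | hc8
    · exact (hcomb _ _ (hua 2.20 hc7.le (by linarith) (by norm_num))
        (hub 2.21 hc8 (by norm_num)) (by norm_num)).trans (by norm_num)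
    rcases le_or_gt x 2.5 with hc9 | hc9
    · -- 2.21 ≤ x ≤ 2.5 : sin x ≤ bound, (sin (x²/π))²⁰ ≤ 1
      have hA := aux_sin_upper2 x (2.21 - 3.141593 / 2) (by norm_num)
        (by nlinarith) (by nlinarith)
      calc Real.sin x * Real.sin (x ^ 2 / π) ^ 20
          ≤ (1 - 2 * ((2.21 - 3.141593 / 2) / 2 - ((2.21 - 3.141593 / 2) / 2) ^ 3 / 6
            - 5 / 96 * ((2.21 - 3.141593 / 2) / 2) ^ 4) ^ 2) * 1 :=
            mul_le_mul hA hpow1 hpow0 (by norm_num)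
        _ ≤ 0.81 := by norm_num
    · -- x ≥ 2.5 : sin x = sin (π - x) ≤ π - x ≤ 0.65
      have hA : Real.sin x ≤ 0.65 := by
        have h1 : Real.sin x = Real.sin (π - x) := (Real.sin_pi_sub x).symm
        have h2 : Real.sin (π - x) ≤ π - x := Real.sin_le (by linarith)
        rw [h1]; linarith
      calc Real.sin x * Real.sin (x ^ 2 / π) ^ 20 ≤ 0.65 * 1 :=
            mul_le_mul hA hpow1 hpow0 (by norm_num)
        _ ≤ 0.81 := by norm_num

/-- The bivariate Michalewicz test function with parameter m = 10. -/
noncomputable def michalewicz2 (x y : ℝ) : ℝ :=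
  -Real.sin x * (Real.sin (x ^ 2 / Real.pi)) ^ 20
    - Real.sin y * (Real.sin (2 * y ^ 2 / Real.pi)) ^ 20

theorem michalewicz2_lower_bound (x y : ℝ) (hx : 0 ≤ x ∧ x ≤ Real.pi)
    (hy : 0 ≤ y ∧ y ≤ Real.pi) : michalewicz2 x y ≥ -1.81 := by
  obtain ⟨hx0, hx1⟩ := hx
  obtain ⟨hy0, hy1⟩ := hy
  have hA := aux_key x hx0 hx1
  have ht20nn : (0:ℝ) ≤ Real.sin (2 * y ^ 2 / Real.pi) ^ 20 := by positivity
  have ht20 : Real.sin (2 * y ^ 2 / Real.pi) ^ 20 ≤ 1 := by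
    have h1 : Real.sin (2 * y ^ 2 / Real.pi) ^ 2 ≤ 1 := Real.sin_sq_le_one _
    calc Real.sin (2 * y ^ 2 / Real.pi) ^ 20
        = (Real.sin (2 * y ^ 2 / Real.pi) ^ 2) ^ 10 := by ring
      _ ≤ 1 := pow_le_one₀ (sq_nonneg _) h1
  have hy2 : Real.sin y * Real.sin (2 * y ^ 2 / Real.pi) ^ 20 ≤ 1 :=
    mul_le_one₀ (Real.sin_le_one y) ht20nn ht20
  have heq : michalewicz2 x y = -(Real.sin x * Real.sin (x ^ 2 / Real.pi) ^ 20)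
      - Real.sin y * Real.sin (2 * y ^ 2 / Real.pi) ^ 20 := by
    unfold michalewicz2; ring
  rw [heq]
  have h81 : -(0.81:ℝ) - 1 = -1.81 := by norm_num
  linarith
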